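/- arXiv:2203.00476 — 3 statements merged into one kernel-verified Lean document; each statement's English description precedes it below -/
import Mathlib

section
/- Fix p ∈ [1,∞), k ∈ ℕ, κ > 1, and β ∈ (0,∞). Let Z_1, Z_2, … be i.i.d. with the p-generalized Gaussian distribution N_p and, for each n, let W_n be a random variable on [0,∞) independent of Z^{(n)} = (Z_1,…,Z_n) such that W_n/n^κ → β in probability and such that the family ((W_n/n^κ)^{-2/p})_{n∈ℕ} is uniformly integrable. For V ∈ V_{n,k} let μ_V^{(n)} be the law of Σ_{j=1}^n n^{κ/p} Z_j (‖Z^{(n)}‖_p^p + W_n)^{-1/p} V_{·,j} and let μ̃_V^{(n)} be the law of (1/β)^{1/p} Σ_{j=1}^n Z_j V_{·,j}. Then, for k ≤ n, sup_{V ∈ V_{n,k}} ρ_LP(μ_V^{(n)}, μ̃_V^{(n)}) → 0 as n → ∞. -/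
open MeasureTheory ProbabilityTheory Filter
open scoped ENNReal NNReal

/-- Matrices over `ℝ` carry the product measurable structure. -/
instance matrixMeasurableSpace {m n : Type*} : MeasurableSpace (Matrix m n ℝ) :=
  inferInstanceAs (MeasurableSpace (m → n → ℝ))

noncomputable section

/-- The `ℓ_p`-norm of a vector in `ℝ^n`. -/
def pnorm {n : ℕ} (p : ℝ) (x : Fin n → ℝ) : ℝ := (∑ i, |x i| ^ p) ^ (1 / p)

/-- The `p`-generalized Gaussian distribution `N_p` on `ℝ`. -/
def gaussianP (p : ℝ) : Measure ℝ :=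
  MeasureTheory.volume.withDensity fun x =>
    ENNReal.ofReal ((2 * p ^ (1 / p) * Real.Gamma (1 + 1 / p))⁻¹ * Real.exp (-|x| ^ p / p))

/-- The unit ball of `ℓ_p^n`. -/
def pBall (n : ℕ) (p : ℝ) : Set (Fin n → ℝ) := {x | pnorm p x ≤ 1}

/-- The uniform probability distribution on `B_p^n`. -/
def uniformBall (n : ℕ) (p : ℝ) : Measure (Fin n → ℝ) :=
  (MeasureTheory.volume (pBall n p))⁻¹ • MeasureTheory.volume.restrict (pBall n p)

/-- The cone probability measure on `S_p^{n-1}`, i.e. the pushforward of the uniform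
distribution on the ball under radial projection `x ↦ x / ‖x‖_p`. -/
def coneMeasure (n : ℕ) (p : ℝ) : Measure (Fin n → ℝ) :=
  Measure.map (fun x => (pnorm p x)⁻¹ • x) (uniformBall n p)

/-- The density `ψ_n` of the `p`-radial distribution `P_{n,p,W}`. -/
def psiDens (n : ℕ) (p : ℝ) (W : Measure ℝ) (s : ℝ) : ℝ :=
  (p ^ ((n : ℝ) / p) * Real.Gamma ((n : ℝ) / p + 1))⁻¹ *
    (1 - s ^ p) ^ (-((n : ℝ) / p) - 1) *
    ∫ w in Set.Ioi (0 : ℝ), w ^ ((n : ℝ) / p) * Real.exp (-(1 / p) * (s ^ p / (1 - s ^ p)) * w) ∂W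

/-- The `p`-radial distribution `P_{n,p,W}` on `B_p^n`. -/
def pRadial (n : ℕ) (p : ℝ) (W : Measure ℝ) : Measure (Fin n → ℝ) :=
  W {0} • coneMeasure n p +
    (uniformBall n p).withDensity fun x => ENNReal.ofReal (psiDens n p W (pnorm p x))

/-- The Stiefel manifold of orthonormal `k`-frames in `ℝ^n`, as `k × n` matrices. -/
def Stiefel (n k : ℕ) : Set (Matrix (Fin k) (Fin n) ℝ) := {V | V * V.transpose = 1}

/-- The map sending an `n × n` matrix to its first `k` rows. -/
def firstRows {n k : ℕ} (h : k ≤ n) (U : Matrix (Fin n) (Fin n) ℝ) :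
    Matrix (Fin k) (Fin n) ℝ :=
  Matrix.of fun i j => U (Fin.castLE h i) j

/-- `IsHaar O ν`: `ν` is the (unique) invariant Haar probability measure on the
orthogonal group `O(n)`. -/
def IsHaar {n : ℕ} (ν : Measure (Matrix.orthogonalGroup (Fin n) ℝ)) : Prop :=
  IsProbabilityMeasure ν ∧ ∀ g : Matrix.orthogonalGroup (Fin n) ℝ,
    Measure.map (fun x => g * x) ν = ν

/-- Identification of `Fin k → ℝ` with Euclidean space. -/
def euc {k : ℕ} (x : Fin k → ℝ) : EuclideanSpace ℝ (Fin k) :=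
  (WithLp.equiv 2 (Fin k → ℝ)).symm x

/-- Large deviation principle with speed `n` and rate function `I` for a sequence of
random elements `ξ n` of a topological space. -/
def IsLDP {X : Type*} [TopologicalSpace X] {Ω : Type*} [MeasurableSpace Ω]
    (P : Measure Ω) (ξ : ℕ → Ω → X) (I : X → ℝ≥0∞) : Prop :=
  (∀ F : Set X, IsClosed F →
      Filter.limsup (fun n : ℕ => (((n : ℝ)⁻¹ : ℝ) : EReal) * ENNReal.log (P {ω | ξ n ω ∈ F}))
        Filter.atTop ≤ -(⨅ x ∈ F, (I x : EReal))) ∧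
  (∀ G : Set X, IsOpen G →
      -(⨅ x ∈ G, (I x : EReal)) ≤
        Filter.liminf (fun n : ℕ => (((n : ℝ)⁻¹ : ℝ) : EReal) * ENNReal.log (P {ω | ξ n ω ∈ G}))
          Filter.atTop)

/-- Weak large deviation principle: upper bound only for compact sets. -/
def IsWeakLDP {X : Type*} [TopologicalSpace X] {Ω : Type*} [MeasurableSpace Ω]
    (P : Measure Ω) (ξ : ℕ → Ω → X) (I : X → ℝ≥0∞) : Prop :=
  (∀ F : Set X, IsCompact F →
      Filter.limsup (fun n : ℕ => (((n : ℝ)⁻¹ : ℝ) : EReal) * ENNReal.log (P {ω | ξ n ω ∈ F}))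
        Filter.atTop ≤ -(⨅ x ∈ F, (I x : EReal))) ∧
  (∀ G : Set X, IsOpen G →
      -(⨅ x ∈ G, (I x : EReal)) ≤
        Filter.liminf (fun n : ℕ => (((n : ℝ)⁻¹ : ℝ) : EReal) * ENNReal.log (P {ω | ξ n ω ∈ G}))
          Filter.atTop)

/-- A good rate function: lower semicontinuous with compact sublevel sets. -/
def IsGoodRate {X : Type*} [TopologicalSpace X] (I : X → ℝ≥0∞) : Prop :=
  LowerSemicontinuous I ∧ ∀ c : ℝ≥0∞, c ≠ ⊤ → IsCompact {x | I x ≤ c}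

/-- The standard Gaussian distribution on `ℝ^k` (Euclidean space). -/
def stdGaussian (k : ℕ) : Measure (EuclideanSpace ℝ (Fin k)) :=
  Measure.map euc (Measure.pi fun _ : Fin k => gaussianReal 0 1)

/-- The `k × k` matrix `A Aᵀ` of a `k × ∞` matrix `A`, given by its columns. -/
def grammian {k : ℕ} (A : ℕ → EuclideanSpace ℝ (Fin k)) : Matrix (Fin k) (Fin k) ℝ :=
  Matrix.of fun i l => ∑' j, A j i * A j l

/-- Square-summability of the rows of a `k × ∞` matrix, given by its columns. -/
def SqSummableRows {k : ℕ} (A : ℕ → EuclideanSpace ℝ (Fin k)) : Prop :=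
  ∀ i : Fin k, Summable fun j => A j i * A j i

/-- `RepLaw μ₁ c σ A S ν` says that `ν` is the distribution of
`c • ∑_j Z_j A_{·,j} + σ • S N_k`, where `Z_1, Z_2, …` are i.i.d. with distribution `μ₁`
and `N_k` is an independent standard Gaussian vector in `ℝ^k`. -/
def RepLaw {k : ℕ} (μ₁ : Measure ℝ) (c σ : ℝ) (A : ℕ → EuclideanSpace ℝ (Fin k))
    (S : Matrix (Fin k) (Fin k) ℝ) (ν : Measure (EuclideanSpace ℝ (Fin k))) : Prop :=
  ∃ (Ω : Type) (_ : MeasurableSpace Ω) (P : Measure Ω) (Z : ℕ → Ω → ℝ)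
    (N : Ω → EuclideanSpace ℝ (Fin k)),
      IsProbabilityMeasure P ∧ (∀ j, Measurable (Z j)) ∧ Measurable N ∧
      (∀ j, Measure.map (Z j) P = μ₁) ∧ Measure.map N P = stdGaussian k ∧
      iIndepFun (m := fun o : Option ℕ => Option.rec (motive := fun o =>
          MeasurableSpace (Option.rec (motive := fun _ => Type)
            (EuclideanSpace ℝ (Fin k)) (fun _ => ℝ) o))
          inferInstance (fun _ => inferInstance) o)
        (fun o : Option ℕ => Option.rec (motive := fun o =>
          Ω → Option.rec (motive := fun _ => Type) (EuclideanSpace ℝ (Fin k)) (fun _ => ℝ) o)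
          N (fun j => Z j) o) P ∧
      ν = Measure.map
        (fun ω => c • (∑' j, Z j ω • A j) +
          σ • (Matrix.toEuclideanCLM (𝕜 := ℝ) S) (N ω)) P

/-- The rate function value `-(1/2) log det(I_k - A Aᵀ)`. -/
def rateVal {k : ℕ} (A : ℕ → EuclideanSpace ℝ (Fin k)) : ℝ≥0∞ :=
  ENNReal.ofReal (-(1 / 2) * Real.log ((1 - grammian A).det))

/-- Uniform integrability of a family of nonnegative random variables, in the classical
probabilistic sense: `sup_n E[|ξ_n| 1_{|ξ_n| > K}] → 0` as `K → ∞`. -/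
def UIFamily {Ω : Type*} [MeasurableSpace Ω] (P : Measure Ω) (ξ : ℕ → Ω → ℝ) : Prop :=
  Filter.Tendsto (fun K : ℝ => ⨆ n : ℕ, ∫⁻ ω in {ω | K < |ξ n ω|}, ENNReal.ofReal |ξ n ω| ∂P)
    Filter.atTop (nhds 0)


section AuxLemmas

open Set Filter MeasureTheory ProbabilityTheory

/-- Integrability of `|x|^s * exp(-|x|^p/p)` on `ℝ`. -/
lemma aux_integrable_abs_rpow_mul_exp {p s : ℝ} (hp : 1 ≤ p) (hs : 0 ≤ s) :
    Integrable (fun x : ℝ => |x| ^ s * Real.exp (-|x| ^ p / p)) := by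
  have hp0 : 0 < p := lt_of_lt_of_le one_pos hp
  have h1 : IntegrableOn (fun x : ℝ => |x| ^ s * Real.exp (-|x| ^ p / p)) (Ioi 0) := by
    have h := integrableOn_rpow_mul_exp_neg_mul_rpow (p := p) (s := s) (b := 1 / p)
      (by linarith) hp0 (by positivity)
    refine h.congr_fun (fun x hx => ?_) measurableSet_Ioi
    have e : -(1 / p) * x ^ p = -x ^ p / p := by ring
    simp only [abs_of_pos (show (0:ℝ) < x from hx), e]
  have h2 : IntegrableOn (fun x : ℝ => |x| ^ s * Real.exp (-|x| ^ p / p)) (Iic 0) := by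
    rw [← Measure.map_neg_eq_self (volume : Measure ℝ)]
    have m : MeasurableEmbedding fun x : ℝ => -x := (Homeomorph.neg ℝ).measurableEmbedding
    rw [m.integrableOn_map_iff]
    simp_rw [Function.comp_def, abs_neg, neg_preimage, neg_Iic, neg_zero]
    exact (integrableOn_Ici_iff_integrableOn_Ioi).mpr h1
  have h3 := h2.union h1
  rwa [Iic_union_Ioi, integrableOn_univ] at h3

lemma aux_gaussianP_integrable_iff {p : ℝ} (hp : 1 ≤ p) (g : ℝ → ℝ) :
    Integrable g (gaussianP p) ↔
      Integrable (fun x => g x * ((2 * p ^ (1 / p) * Real.Gamma (1 + 1 / p))⁻¹ *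
        Real.exp (-|x| ^ p / p))) volume := by
  have hp0 : 0 < p := lt_of_lt_of_le one_pos hp
  have hc : 0 < (2 * p ^ (1 / p) * Real.Gamma (1 + 1 / p))⁻¹ := by
    refine inv_pos.mpr (mul_pos (mul_pos two_pos (Real.rpow_pos_of_pos hp0 _))
      (Real.Gamma_pos_of_pos (by positivity)))
  have hmeas : Measurable fun x : ℝ => ENNReal.ofReal
      ((2 * p ^ (1 / p) * Real.Gamma (1 + 1 / p))⁻¹ * Real.exp (-|x| ^ p / p)) := by
    refine Measurable.ennreal_ofReal ?_
    refine Measurable.const_mul ?_ _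
    refine Measurable.exp ?_
    exact (((Real.continuous_rpow_const hp0.le).comp continuous_abs).measurable).neg.div_const p
  rw [gaussianP, integrable_withDensity_iff hmeas
    (Eventually.of_forall fun x => ENNReal.ofReal_lt_top)]
  have he : (fun x => g x * (ENNReal.ofReal ((2 * p ^ (1 / p) * Real.Gamma (1 + 1 / p))⁻¹ *
        Real.exp (-|x| ^ p / p))).toReal)
      = fun x => g x * ((2 * p ^ (1 / p) * Real.Gamma (1 + 1 / p))⁻¹ *
        Real.exp (-|x| ^ p / p)) := by
    funext x
    rw [ENNReal.toReal_ofReal (mul_nonneg hc.le (Real.exp_nonneg _))]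
  rw [he]

lemma aux_gaussianP_integrable_abs_rpow {p s : ℝ} (hp : 1 ≤ p) (hs : 0 ≤ s) :
    Integrable (fun x : ℝ => |x| ^ s) (gaussianP p) := by
  rw [aux_gaussianP_integrable_iff hp]
  have he : (fun x : ℝ => |x| ^ s * ((2 * p ^ (1 / p) * Real.Gamma (1 + 1 / p))⁻¹ *
        Real.exp (-|x| ^ p / p)))
      = fun x : ℝ => (2 * p ^ (1 / p) * Real.Gamma (1 + 1 / p))⁻¹ *
        (|x| ^ s * Real.exp (-|x| ^ p / p)) := by
    funext x; ring
  rw [he]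
  exact (aux_integrable_abs_rpow_mul_exp hp hs).const_mul _

lemma aux_gaussianP_integrable_id {p : ℝ} (hp : 1 ≤ p) :
    Integrable (fun x : ℝ => x) (gaussianP p) := by
  have hp0 : 0 < p := lt_of_lt_of_le one_pos hp
  rw [aux_gaussianP_integrable_iff hp]
  set c := (2 * p ^ (1 / p) * Real.Gamma (1 + 1 / p))⁻¹ with hcdef
  have hc : 0 < c := by
    refine inv_pos.mpr (mul_pos (mul_pos two_pos (Real.rpow_pos_of_pos hp0 _))
      (Real.Gamma_pos_of_pos (by positivity)))
  have hmaj : Integrable (fun x : ℝ => c * (|x| ^ (1:ℝ) * Real.exp (-|x| ^ p / p))) volume :=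
    (aux_integrable_abs_rpow_mul_exp hp zero_le_one).const_mul _
  refine hmaj.mono ?_ (Eventually.of_forall fun x => ?_)
  · refine Continuous.aestronglyMeasurable ?_
    refine continuous_id.mul (continuous_const.mul (Real.continuous_exp.comp ?_))
    exact (((Real.continuous_rpow_const hp0.le).comp continuous_abs).neg).div_const p
  · have e1 : |x * (c * Real.exp (-|x| ^ p / p))| = |x| * (c * Real.exp (-|x| ^ p / p)) := by
      rw [abs_mul, abs_of_nonneg (mul_nonneg hc.le (Real.exp_nonneg _))]
    have e2 : |c * (|x| * Real.exp (-|x| ^ p / p))| = c * (|x| * Real.exp (-|x| ^ p / p)) := by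
      rw [abs_of_nonneg (mul_nonneg hc.le (mul_nonneg (abs_nonneg _) (Real.exp_nonneg _)))]
    rw [Real.norm_eq_abs, Real.norm_eq_abs, Real.rpow_one, e1, e2]
    exact le_of_eq (by ring)

lemma aux_gaussianP_integrable_sq {p : ℝ} (hp : 1 ≤ p) :
    Integrable (fun x : ℝ => x ^ 2) (gaussianP p) := by
  have h := aux_gaussianP_integrable_abs_rpow hp (show (0:ℝ) ≤ 2 by norm_num)
  refine h.congr (Eventually.of_forall fun x => ?_)
  show |x| ^ (2:ℝ) = x ^ 2
  rw [show ((2:ℝ) = ((2:ℕ):ℝ)) by norm_num, Real.rpow_natCast, sq_abs]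

lemma aux_gaussianP_mean_zero {p : ℝ} (hp : 1 ≤ p) :
    ∫ x, x ∂(gaussianP p) = 0 := by
  have hp0 : 0 < p := lt_of_lt_of_le one_pos hp
  set c := (2 * p ^ (1 / p) * Real.Gamma (1 + 1 / p))⁻¹ with hcdef
  have hc : 0 < c := by
    refine inv_pos.mpr (mul_pos (mul_pos two_pos (Real.rpow_pos_of_pos hp0 _))
      (Real.Gamma_pos_of_pos (by positivity)))
  have hd : ∀ x : ℝ, 0 ≤ c * Real.exp (-|x| ^ p / p) :=
    fun x => mul_nonneg hc.le (Real.exp_nonneg _)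
  have hmeas : Measurable fun x : ℝ => (c * Real.exp (-|x| ^ p / p)).toNNReal := by
    refine Measurable.real_toNNReal ?_
    refine Measurable.const_mul ?_ _
    exact Measurable.exp
      ((((Real.continuous_rpow_const hp0.le).comp continuous_abs).measurable).neg.div_const p)
  have h1 : ∫ x, x ∂(gaussianP p)
      = ∫ x, ((c * Real.exp (-|x| ^ p / p)).toNNReal : ℝ≥0) • x ∂(volume : Measure ℝ) := by
    exact integral_withDensity_eq_integral_smul hmeas _
  rw [h1]
  have h2 : (fun x : ℝ => ((c * Real.exp (-|x| ^ p / p)).toNNReal : ℝ≥0) • x)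
      = fun x : ℝ => (c * Real.exp (-|x| ^ p / p)) * x := by
    funext x
    rw [NNReal.smul_def, smul_eq_mul, Real.coe_toNNReal _ (hd x)]
  rw [h2]
  have h3 := MeasureTheory.integral_neg_eq_self
    (fun x : ℝ => (c * Real.exp (-|x| ^ p / p)) * x) (volume : Measure ℝ)
  have h4 : (fun x : ℝ => (c * Real.exp (-|(-x)| ^ p / p)) * (-x))
      = fun x : ℝ => -((c * Real.exp (-|x| ^ p / p)) * x) := by
    funext x; rw [abs_neg]; ring
  rw [h4] at h3
  rw [integral_neg] at h3
  linarith [h3]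

/-- Coupling bound for the Lévy-Prokhorov distance. -/
lemma aux_lp_coupling {α : Type*} [MeasurableSpace α] {E : Type*} [MeasurableSpace E]
    [PseudoMetricSpace E] [OpensMeasurableSpace E]
    (P : Measure α) [IsProbabilityMeasure P] {X Y : α → E}
    (hX : Measurable X) (hY : Measurable Y) {ε : ℝ} (hε : 0 < ε)
    (h : P {ω | ε ≤ dist (X ω) (Y ω)} ≤ ENNReal.ofReal ε) :
    levyProkhorovDist (Measure.map X P) (Measure.map Y P) ≤ ε := by
  have hED : levyProkhorovEDist (Measure.map X P) (Measure.map Y P) ≤ ENNReal.ofReal ε := by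
    apply levyProkhorovEDist_le_of_forall
    intro ε' B hlt hfin hB
    have hεε' : ε < ε'.toReal := (ENNReal.ofReal_lt_iff_lt_toReal hε.le hfin.ne).mp hlt
    have key : ∀ U V : α → E, Measurable U → Measurable V →
        (∀ ω, dist (U ω) (V ω) = dist (X ω) (Y ω)) →
        Measure.map U P B ≤ Measure.map V P (Metric.thickening ε'.toReal B) + ε' := by
      intro U V hU hV hUV
      rw [Measure.map_apply hU hB,
        Measure.map_apply hV Metric.isOpen_thickening.measurableSet]
      have hsub : U ⁻¹' B ⊆ (V ⁻¹' Metric.thickening ε'.toReal B)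
          ∪ {ω | ε ≤ dist (X ω) (Y ω)} := by
        intro ω hω
        by_cases hd : ε ≤ dist (X ω) (Y ω)
        · exact Or.inr hd
        · push_neg at hd
          left
          refine Metric.mem_thickening_iff.mpr ⟨U ω, hω, ?_⟩
          have : dist (V ω) (U ω) = dist (X ω) (Y ω) := by rw [dist_comm, hUV]
          rw [this]
          exact lt_trans hd hεε'
      calc P (U ⁻¹' B)
          ≤ P ((V ⁻¹' Metric.thickening ε'.toReal B) ∪ {ω | ε ≤ dist (X ω) (Y ω)}) :=
            measure_mono hsub
        _ ≤ P (V ⁻¹' Metric.thickening ε'.toReal B) + P {ω | ε ≤ dist (X ω) (Y ω)} :=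
            measure_union_le _ _
        _ ≤ P (V ⁻¹' Metric.thickening ε'.toReal B) + ε' :=
            add_le_add le_rfl (h.trans hlt.le)
    exact ⟨key X Y hX hY (fun ω => rfl), key Y X hY hX (fun ω => dist_comm _ _)⟩
  have hdd : levyProkhorovDist (Measure.map X P) (Measure.map Y P)
      = (levyProkhorovEDist (Measure.map X P) (Measure.map Y P)).toReal := rfl
  rw [hdd]
  exact ENNReal.toReal_le_of_le_ofReal hε.le hED

end AuxLemmas


theorem statement7
    (p : ℝ) (hp : 1 ≤ p) (k : ℕ) (κ : ℝ) (hκ : 1 < κ) (β : ℝ) (hβ : 0 < β)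
    (Ω : Type) [MeasurableSpace Ω] (P : Measure Ω) [IsProbabilityMeasure P]
    (Z : ℕ → Ω → ℝ) (hZmeas : ∀ j, Measurable (Z j))
    (hZlaw : ∀ j, Measure.map (Z j) P = gaussianP p)
    (hZindep : iIndepFun (m := fun _ => inferInstance) Z P)
    (W : ℕ → Ω → ℝ) (hWmeas : ∀ n, Measurable (W n)) (hWpos : ∀ n ω, 0 ≤ W n ω)
    (hWindep : ∀ n : ℕ, IndepFun (fun ω (i : Fin n) => Z i ω) (W n) P)
    (hWconv : TendstoInMeasure P (fun (n : ℕ) ω => W n ω / (n : ℝ) ^ κ) Filter.atTop (fun _ => β))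
    (hUI : UIFamily P (fun (n : ℕ) ω => (W n ω / (n : ℝ) ^ κ) ^ (-(2 / p)))) :
    Filter.Tendsto
      (fun n : ℕ => ⨆ V ∈ Stiefel n k, levyProkhorovDist
        (Measure.map (fun ω => euc (Matrix.mulVec V (fun j : Fin n => (n : ℝ) ^ (κ / p) * Z (j : ℕ) ω / ((∑ i : Fin n, |Z (i : ℕ) ω| ^ p) + W n ω) ^ (1 / p)))) P)
        (Measure.map (fun ω => euc (Matrix.mulVec V (fun j : Fin n => ((1 / β) ^ (1 / p)) * Z (j : ℕ) ω))) P))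
      Filter.atTop (nhds 0) := by
  classical
  have hp0 : 0 < p := lt_of_lt_of_le one_pos hp
  have hZae : ∀ j : ℕ, AEMeasurable (Z j) P := fun j => (hZmeas j).aemeasurable
  have hint_id : Integrable (fun x : ℝ => x) (gaussianP p) := aux_gaussianP_integrable_id hp
  have hint_sq : Integrable (fun x : ℝ => x ^ 2) (gaussianP p) := aux_gaussianP_integrable_sq hp
  have hint_p : Integrable (fun x : ℝ => |x| ^ p) (gaussianP p) :=
    aux_gaussianP_integrable_abs_rpow hp (by linarith)
  set m2 : ℝ := ∫ x, x ^ 2 ∂(gaussianP p) with hm2def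
  set mp : ℝ := ∫ x, |x| ^ p ∂(gaussianP p) with hmpdef
  have hm2 : 0 ≤ m2 := integral_nonneg fun x => sq_nonneg x
  have hmp : 0 ≤ mp := integral_nonneg fun x => Real.rpow_nonneg (abs_nonneg x) p
  -- transfer of moments to the random variables
  have hZ1 : ∀ j : ℕ, Integrable (Z j) P := fun j =>
    (integrable_map_measure (f := Z j) (g := fun x : ℝ => x)
      (by rw [hZlaw j]; exact hint_id.aestronglyMeasurable) (hZae j)).mp
      (by rw [hZlaw j]; exact hint_id)
  have hZsq : ∀ j : ℕ, Integrable (fun ω => Z j ω ^ 2) P := fun j =>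
    (integrable_map_measure (f := Z j) (g := fun x : ℝ => x ^ 2)
      (by rw [hZlaw j]; exact hint_sq.aestronglyMeasurable) (hZae j)).mp
      (by rw [hZlaw j]; exact hint_sq)
  have hZp : ∀ j : ℕ, Integrable (fun ω => |Z j ω| ^ p) P := fun j =>
    (integrable_map_measure (f := Z j) (g := fun x : ℝ => |x| ^ p)
      (by rw [hZlaw j]; exact hint_p.aestronglyMeasurable) (hZae j)).mp
      (by rw [hZlaw j]; exact hint_p)
  have hEZ : ∀ j : ℕ, ∫ ω, Z j ω ∂P = 0 := by
    intro j
    have h := integral_map (φ := Z j) (hZae j) (f := fun x : ℝ => x)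
      (by rw [hZlaw j]; exact hint_id.aestronglyMeasurable)
    rw [hZlaw j] at h
    rw [← h]
    exact aux_gaussianP_mean_zero hp
  have hEsq : ∀ j : ℕ, ∫ ω, Z j ω ^ 2 ∂P = m2 := by
    intro j
    have h := integral_map (φ := Z j) (hZae j) (f := fun x : ℝ => x ^ 2)
      (by rw [hZlaw j]; exact hint_sq.aestronglyMeasurable)
    rw [hZlaw j] at h
    rw [← h]
  have hEp : ∀ j : ℕ, ∫ ω, |Z j ω| ^ p ∂P = mp := by
    intro j
    have h := integral_map (φ := Z j) (hZae j) (f := fun x : ℝ => |x| ^ p)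
      (by rw [hZlaw j]; exact hint_p.aestronglyMeasurable)
    rw [hZlaw j] at h
    rw [← h]
  have hindep : ∀ j l : ℕ, j ≠ l → IndepFun (Z j) (Z l) P := fun j l h => hZindep.indepFun h
  -- second moment of the projected vector
  have keyQ : ∀ (n : ℕ) (V : Matrix (Fin k) (Fin n) ℝ), V ∈ Stiefel n k →
      Integrable (fun ω => ∑ i : Fin k, (∑ j : Fin n, V i j * Z (j : ℕ) ω) ^ 2) P ∧
      ∫ ω, ∑ i : Fin k, (∑ j : Fin n, V i j * Z (j : ℕ) ω) ^ 2 ∂P = (k : ℝ) * m2 := by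
    intro n V hV
    have hrow : ∀ i : Fin k, ∑ j : Fin n, V i j * V i j = 1 := by
      intro i
      have h := congrArg (fun M : Matrix (Fin k) (Fin k) ℝ => M i i) hV
      simpa [Matrix.mul_apply, Matrix.transpose_apply, Matrix.one_apply] using h
    have hterm_int : ∀ (i : Fin k) (j l : Fin n),
        Integrable (fun ω => (V i j * Z (j : ℕ) ω) * (V i l * Z (l : ℕ) ω)) P := by
      intro i j l
      rcases eq_or_ne (j : ℕ) (l : ℕ) with h | h
      · obtain rfl : j = l := Fin.ext h
        have e : (fun ω => (V i j * Z (j : ℕ) ω) * (V i j * Z (j : ℕ) ω))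
            = fun ω => (V i j * V i j) * Z (j : ℕ) ω ^ 2 := by funext ω; ring
        rw [e]
        exact (hZsq (j : ℕ)).const_mul _
      · have e : (fun ω => (V i j * Z (j : ℕ) ω) * (V i l * Z (l : ℕ) ω))
            = fun ω => (V i j * V i l) * (Z (j : ℕ) ω * Z (l : ℕ) ω) := by funext ω; ring
        rw [e]
        exact ((hindep _ _ h).integrable_mul (hZ1 (j : ℕ)) (hZ1 (l : ℕ))).const_mul _
    have hterm_val : ∀ (i : Fin k) (j l : Fin n),
        ∫ ω, (V i j * Z (j : ℕ) ω) * (V i l * Z (l : ℕ) ω) ∂P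
          = if j = l then V i j * V i l * m2 else 0 := by
      intro i j l
      have e : (fun ω => (V i j * Z (j : ℕ) ω) * (V i l * Z (l : ℕ) ω))
          = fun ω => (V i j * V i l) * (Z (j : ℕ) ω * Z (l : ℕ) ω) := by funext ω; ring
      rw [e, integral_const_mul]
      rcases eq_or_ne j l with h | h
      · subst h
        rw [if_pos rfl]
        congr 1
        have e2 : (fun ω => Z (j : ℕ) ω * Z (j : ℕ) ω) = fun ω => Z (j : ℕ) ω ^ 2 := by
          funext ω; exact (sq _).symm
        rw [e2]
        exact hEsq (j : ℕ)
      · rw [if_neg h]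
        have hne : (j : ℕ) ≠ (l : ℕ) := fun hh => h (Fin.ext hh)
        have h5 : ∫ ω, Z (j : ℕ) ω * Z (l : ℕ) ω ∂P = 0 := by
          have h4 := IndepFun.integral_mul_eq_mul_integral (hindep _ _ hne) (hZ1 (j : ℕ)).aestronglyMeasurable (hZ1 (l : ℕ)).aestronglyMeasurable
          calc ∫ ω, Z (j : ℕ) ω * Z (l : ℕ) ω ∂P
              = (∫ ω, Z (j : ℕ) ω ∂P) * ∫ ω, Z (l : ℕ) ω ∂P := h4
            _ = 0 := by rw [hEZ (j : ℕ)]; ring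
        rw [h5, mul_zero]
    have hLint : ∀ i : Fin k,
        Integrable (fun ω => (∑ j : Fin n, V i j * Z (j : ℕ) ω) ^ 2) P := by
      intro i
      have e : (fun ω => (∑ j : Fin n, V i j * Z (j : ℕ) ω) ^ 2)
          = fun ω => ∑ j : Fin n, ∑ l : Fin n, (V i j * Z (j : ℕ) ω) * (V i l * Z (l : ℕ) ω) := by
        funext ω
        rw [sq, Finset.sum_mul_sum]
      rw [e]
      exact integrable_finset_sum _ fun j _ => integrable_finset_sum _ fun l _ => hterm_int i j l
    have hLval : ∀ i : Fin k,
        ∫ ω, (∑ j : Fin n, V i j * Z (j : ℕ) ω) ^ 2 ∂P = m2 := by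
      intro i
      have e : (fun ω => (∑ j : Fin n, V i j * Z (j : ℕ) ω) ^ 2)
          = fun ω => ∑ j : Fin n, ∑ l : Fin n, (V i j * Z (j : ℕ) ω) * (V i l * Z (l : ℕ) ω) := by
        funext ω
        rw [sq, Finset.sum_mul_sum]
      rw [e, integral_finset_sum _ (fun j _ => integrable_finset_sum _ fun l _ => hterm_int i j l)]
      have e2 : ∀ j ∈ (Finset.univ : Finset (Fin n)),
          ∫ ω, ∑ l : Fin n, (V i j * Z (j : ℕ) ω) * (V i l * Z (l : ℕ) ω) ∂P
            = V i j * V i j * m2 := by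
        intro j _
        rw [integral_finset_sum _ (fun l _ => hterm_int i j l)]
        rw [Finset.sum_congr rfl fun l _ => hterm_val i j l]
        rw [Finset.sum_ite_eq (Finset.univ) j (fun l => V i j * V i l * m2)]
        simp
      rw [Finset.sum_congr rfl e2, ← Finset.sum_mul, hrow i, one_mul]
    refine ⟨integrable_finset_sum _ fun i _ => hLint i, ?_⟩
    rw [integral_finset_sum _ fun i _ => hLint i]
    rw [Finset.sum_congr rfl fun i _ => hLval i]
    simp [Finset.sum_const, Finset.card_univ]
  -- start of the limit argument
  rw [Metric.tendsto_atTop]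
  intro ε hε
  have hε2 : 0 < ε / 2 := by positivity
  set δ : ℝ := Real.sqrt ((ε / 2) ^ 3 / (2 * ((k : ℝ) * m2 + 1))) with hδdef
  have hδpos : 0 < δ := Real.sqrt_pos.mpr (by positivity)
  have hδsq : δ ^ 2 = (ε / 2) ^ 3 / (2 * ((k : ℝ) * m2 + 1)) := Real.sq_sqrt (by positivity)
  -- Chebyshev bound for the quadratic form, uniform in n and V
  have hQbound : ∀ (n : ℕ) (V : Matrix (Fin k) (Fin n) ℝ), V ∈ Stiefel n k →
      P {ω | (ε / 2 / δ) ^ 2 ≤ ∑ i : Fin k, (∑ j : Fin n, V i j * Z (j : ℕ) ω) ^ 2}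
        ≤ ENNReal.ofReal (ε / 2 / 2) := by
    intro n V hV
    obtain ⟨hQint, hQval⟩ := keyQ n V hV
    have hcheb := mul_meas_ge_le_integral_of_nonneg
      (Filter.Eventually.of_forall fun ω => Finset.sum_nonneg fun i _ => sq_nonneg _)
      hQint ((ε / 2 / δ) ^ 2)
    rw [hQval] at hcheb
    have htpos : 0 < (ε / 2 / δ) ^ 2 := by positivity
    have hKle : (k : ℝ) * m2 ≤ (ε / 2 / δ) ^ 2 * (ε / 2 / 2) := by
      have hval : (ε / 2 / δ) ^ 2 * (ε / 2 / 2) = (k : ℝ) * m2 + 1 := by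
        rw [div_pow, hδsq]
        field_simp
      rw [hval]
      linarith
    have h2 : (ε / 2 / δ) ^ 2 * (P {ω | (ε / 2 / δ) ^ 2 ≤
        ∑ i : Fin k, (∑ j : Fin n, V i j * Z (j : ℕ) ω) ^ 2}).toReal
        ≤ (ε / 2 / δ) ^ 2 * (ε / 2 / 2) := hcheb.trans hKle
    have h3 := le_of_mul_le_mul_left h2 htpos
    exact (ENNReal.le_ofReal_iff_toReal_le (measure_ne_top _ _) (by positivity)).mpr h3
  -- continuity of t ↦ t^{-1/p} at β
  have hcont : ContinuousAt (fun x : ℝ => x ^ (-(1 / p))) β :=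
    Real.continuousAt_rpow_const β _ (Or.inl hβ.ne')
  obtain ⟨θ₀, hθ₀pos, hθ₀⟩ := Metric.continuousAt_iff.mp hcont δ hδpos
  set θ : ℝ := min θ₀ (β / 2) with hθdef
  have hθpos : 0 < θ := lt_min hθ₀pos (by positivity)
  have hθβ : θ ≤ β / 2 := min_le_right _ _
  have hb : (1 / β) ^ (1 / p) = β ^ (-(1 / p)) := by
    rw [one_div β, Real.inv_rpow hβ.le, ← Real.rpow_neg hβ.le]
  -- Markov bound for the sum S_n
  have hSbound : ∀ (n : ℕ) (T : ℝ), 0 < T →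
      P {ω | T ≤ ∑ i : Fin n, |Z (i : ℕ) ω| ^ p} ≤ ENNReal.ofReal ((n : ℝ) * mp / T) := by
    intro n T hT
    have hint : Integrable (fun ω => ∑ i : Fin n, |Z (i : ℕ) ω| ^ p) P :=
      integrable_finset_sum _ fun i _ => hZp (i : ℕ)
    have hmean : ∫ ω, ∑ i : Fin n, |Z (i : ℕ) ω| ^ p ∂P = (n : ℝ) * mp := by
      rw [integral_finset_sum (Finset.univ)
        (f := fun (i : Fin n) (ω : Ω) => |Z (i : ℕ) ω| ^ p) (fun i _ => hZp (i : ℕ))]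
      rw [show (∑ i : Fin n, ∫ ω, |Z (i : ℕ) ω| ^ p ∂P) = ∑ _i : Fin n, mp from
        Finset.sum_congr rfl fun i _ => hEp (i : ℕ)]
      simp [Finset.sum_const, Finset.card_univ, mul_comm]
    have hmarkov := mul_meas_ge_le_integral_of_nonneg
      (Filter.Eventually.of_forall fun ω => Finset.sum_nonneg fun i _ =>
        Real.rpow_nonneg (abs_nonneg _) p) hint T
    rw [hmean] at hmarkov
    refine (ENNReal.le_ofReal_iff_toReal_le (measure_ne_top _ _)
      (div_nonneg (mul_nonneg (Nat.cast_nonneg n) hmp) hT.le)).mpr ?_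
    rw [le_div_iff₀ hT, mul_comm _ T]
    exact hmarkov
  -- eventual smallness of `S_n / n^κ`
  have hstend : Filter.Tendsto (fun n : ℕ => (n : ℝ) * mp / (θ / 2 * (n : ℝ) ^ κ))
      Filter.atTop (nhds 0) := by
    have h1 : Filter.Tendsto (fun x : ℝ => x ^ (-(κ - 1))) Filter.atTop (nhds 0) :=
      tendsto_rpow_neg_atTop (by linarith)
    have h2 : Filter.Tendsto (fun n : ℕ => ((n : ℝ)) ^ (-(κ - 1))) Filter.atTop (nhds 0) :=
      h1.comp tendsto_natCast_atTop_atTop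
    have h3 := h2.const_mul (2 * mp / θ)
    rw [mul_zero] at h3
    refine Filter.Tendsto.congr' ?_ h3
    filter_upwards [Filter.eventually_ge_atTop 1] with n hn
    have hnpos : (0 : ℝ) < (n : ℝ) := Nat.cast_pos.mpr (by omega)
    have hκn : (0 : ℝ) < (n : ℝ) ^ κ := Real.rpow_pos_of_pos hnpos κ
    have e : (n : ℝ) ^ (-(κ - 1)) = (n : ℝ) / (n : ℝ) ^ κ := by
      rw [show -(κ - 1) = 1 - κ by ring, Real.rpow_sub hnpos, Real.rpow_one]
    rw [e]
    field_simp
  have hSev : ∀ᶠ n : ℕ in Filter.atTop,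
      P {ω | θ / 2 * (n : ℝ) ^ κ ≤ ∑ i : Fin n, |Z (i : ℕ) ω| ^ p}
        ≤ ENNReal.ofReal (ε / 2 / 4) := by
    filter_upwards [Filter.Tendsto.eventually_lt_const (show (0 : ℝ) < ε / 2 / 4 by positivity)
      hstend, Filter.eventually_ge_atTop 1] with n hlt hn
    have hnpos : (0 : ℝ) < (n : ℝ) := Nat.cast_pos.mpr (by omega)
    have hκn : (0 : ℝ) < (n : ℝ) ^ κ := Real.rpow_pos_of_pos hnpos κ
    refine (hSbound n (θ / 2 * (n : ℝ) ^ κ) (by positivity)).trans ?_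
    exact ENNReal.ofReal_le_ofReal hlt.le
  have hWev : ∀ᶠ n : ℕ in Filter.atTop,
      P {ω | θ / 2 ≤ dist (W n ω / (n : ℝ) ^ κ) β} ≤ ENNReal.ofReal (ε / 2 / 4) := by
    have h := hWconv (ENNReal.ofReal (θ / 2)) (ENNReal.ofReal_pos.mpr (by positivity))
    have h2 := Filter.Tendsto.eventually_lt_const
      (show (0 : ℝ≥0∞) < ENNReal.ofReal (ε / 2 / 4) from ENNReal.ofReal_pos.mpr (by positivity)) h
    exact h2.mono fun n hn => le_trans (le_of_eq (by
      congr 1; ext ω; simp [edist_dist, ENNReal.ofReal_le_ofReal_iff dist_nonneg])) hn.le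
  -- eventual bound for the scalar factor
  have hCev : ∀ᶠ n : ℕ in Filter.atTop,
      P {ω | δ ≤ |(n : ℝ) ^ (κ / p) / ((∑ i : Fin n, |Z (i : ℕ) ω| ^ p) + W n ω) ^ (1 / p)
          - (1 / β) ^ (1 / p)|} ≤ ENNReal.ofReal (ε / 2 / 2) := by
    filter_upwards [hSev, hWev, Filter.eventually_ge_atTop 1] with n hS hW hn1
    have hnpos : (0 : ℝ) < (n : ℝ) := Nat.cast_pos.mpr (by omega)
    have hκn : (0 : ℝ) < (n : ℝ) ^ κ := Real.rpow_pos_of_pos hnpos κ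
    have hincl : {ω | δ ≤ |(n : ℝ) ^ (κ / p) / ((∑ i : Fin n, |Z (i : ℕ) ω| ^ p) + W n ω) ^ (1 / p)
          - (1 / β) ^ (1 / p)|}
        ⊆ {ω | θ / 2 * (n : ℝ) ^ κ ≤ ∑ i : Fin n, |Z (i : ℕ) ω| ^ p}
          ∪ {ω | θ / 2 ≤ dist (W n ω / (n : ℝ) ^ κ) β} := by
      intro ω hω
      simp only [Set.mem_setOf_eq] at hω
      by_contra hcon
      simp only [Set.mem_union, Set.mem_setOf_eq, not_or, not_le] at hcon
      obtain ⟨h1, h2⟩ := hcon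
      have hSnonneg : 0 ≤ ∑ i : Fin n, |Z (i : ℕ) ω| ^ p :=
        Finset.sum_nonneg fun i _ => Real.rpow_nonneg (abs_nonneg _) p
      have hW0 : 0 ≤ W n ω := hWpos n ω
      rw [Real.dist_eq] at h2
      have hSd : (∑ i : Fin n, |Z (i : ℕ) ω| ^ p) / (n : ℝ) ^ κ < θ / 2 :=
        (div_lt_iff₀ hκn).mpr (by linarith)
      have hRd : |((∑ i : Fin n, |Z (i : ℕ) ω| ^ p) + W n ω) / (n : ℝ) ^ κ - β| < θ := by
        have e : ((∑ i : Fin n, |Z (i : ℕ) ω| ^ p) + W n ω) / (n : ℝ) ^ κ - β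
            = (∑ i : Fin n, |Z (i : ℕ) ω| ^ p) / (n : ℝ) ^ κ
              + (W n ω / (n : ℝ) ^ κ - β) := by
          rw [add_div]; ring
        rw [e]
        calc |(∑ i : Fin n, |Z (i : ℕ) ω| ^ p) / (n : ℝ) ^ κ + (W n ω / (n : ℝ) ^ κ - β)|
            ≤ |(∑ i : Fin n, |Z (i : ℕ) ω| ^ p) / (n : ℝ) ^ κ|
              + |W n ω / (n : ℝ) ^ κ - β| := abs_add_le _ _
          _ < θ := by
              rw [abs_of_nonneg (div_nonneg hSnonneg hκn.le)]
              linarith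
      set R : ℝ := ((∑ i : Fin n, |Z (i : ℕ) ω| ^ p) + W n ω) / (n : ℝ) ^ κ with hRdef
      have hRb := abs_lt.mp hRd
      have hRpos : 0 < R := by linarith [hRb.1]
      have hApos : 0 < (∑ i : Fin n, |Z (i : ℕ) ω| ^ p) + W n ω := by
        have e : (∑ i : Fin n, |Z (i : ℕ) ω| ^ p) + W n ω = R * (n : ℝ) ^ κ :=
          (div_mul_cancel₀ _ hκn.ne').symm
        rw [e]
        exact mul_pos hRpos hκn
      have hcf : (n : ℝ) ^ (κ / p) / ((∑ i : Fin n, |Z (i : ℕ) ω| ^ p) + W n ω) ^ (1 / p)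
          = R ^ (-(1 / p)) := by
        rw [hRdef, Real.rpow_neg (div_nonneg hApos.le hκn.le),
          Real.div_rpow hApos.le hκn.le, inv_div]
        congr 1
        rw [← Real.rpow_mul hnpos.le, mul_one_div]
      have hdist : |(n : ℝ) ^ (κ / p) / ((∑ i : Fin n, |Z (i : ℕ) ω| ^ p) + W n ω) ^ (1 / p)
          - (1 / β) ^ (1 / p)| < δ := by
        rw [hcf, hb]
        have hd : dist R β < θ₀ := by
          rw [Real.dist_eq]
          exact lt_of_lt_of_le hRd (min_le_left _ _)
        have := hθ₀ hd
        rwa [Real.dist_eq] at this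
      linarith
    calc P {ω | δ ≤ |(n : ℝ) ^ (κ / p) /
            ((∑ i : Fin n, |Z (i : ℕ) ω| ^ p) + W n ω) ^ (1 / p) - (1 / β) ^ (1 / p)|}
        ≤ P ({ω | θ / 2 * (n : ℝ) ^ κ ≤ ∑ i : Fin n, |Z (i : ℕ) ω| ^ p}
            ∪ {ω | θ / 2 ≤ dist (W n ω / (n : ℝ) ^ κ) β}) := measure_mono hincl
      _ ≤ P {ω | θ / 2 * (n : ℝ) ^ κ ≤ ∑ i : Fin n, |Z (i : ℕ) ω| ^ p}
            + P {ω | θ / 2 ≤ dist (W n ω / (n : ℝ) ^ κ) β} := measure_union_le _ _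
      _ ≤ ENNReal.ofReal (ε / 2 / 4) + ENNReal.ofReal (ε / 2 / 4) := add_le_add hS hW
      _ = ENNReal.ofReal (ε / 2 / 2) := by
          rw [← ENNReal.ofReal_add (by positivity) (by positivity)]
          congr 1
          ring
  -- the eventual uniform bound on the Lévy-Prokhorov distance
  have hfinal : ∀ᶠ n : ℕ in Filter.atTop, ∀ V ∈ Stiefel n k,
      levyProkhorovDist
        (Measure.map (fun ω => euc (Matrix.mulVec V (fun j : Fin n =>
          (n : ℝ) ^ (κ / p) * Z (j : ℕ) ω /
            ((∑ i : Fin n, |Z (i : ℕ) ω| ^ p) + W n ω) ^ (1 / p)))) P)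
        (Measure.map (fun ω => euc (Matrix.mulVec V (fun j : Fin n =>
          ((1 / β) ^ (1 / p)) * Z (j : ℕ) ω))) P) ≤ ε / 2 := by
    filter_upwards [hCev] with n hC
    intro V hV
    have heuc : Measurable (euc (k := k)) :=
      (MeasurableEquiv.toLp 2 (Fin k → ℝ)).measurable
    have hDmeas : Measurable fun ω => ((∑ i : Fin n, |Z (i : ℕ) ω| ^ p) + W n ω) ^ (1 / p) := by
      refine Measurable.comp (Real.continuous_rpow_const (by positivity)).measurable ?_
      refine Measurable.add ?_ (hWmeas n)
      exact Finset.measurable_sum _ fun i _ =>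
        ((Real.continuous_rpow_const hp0.le).comp continuous_abs).measurable.comp (hZmeas (i : ℕ))
    have hXvec : Measurable fun ω => Matrix.mulVec V (fun j : Fin n =>
        (n : ℝ) ^ (κ / p) * Z (j : ℕ) ω /
          ((∑ i : Fin n, |Z (i : ℕ) ω| ^ p) + W n ω) ^ (1 / p)) := by
      refine measurable_pi_lambda _ fun i => ?_
      have e : (fun ω => Matrix.mulVec V (fun j : Fin n =>
          (n : ℝ) ^ (κ / p) * Z (j : ℕ) ω /
            ((∑ i : Fin n, |Z (i : ℕ) ω| ^ p) + W n ω) ^ (1 / p)) i)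
          = fun ω => ∑ j : Fin n, V i j * ((n : ℝ) ^ (κ / p) * Z (j : ℕ) ω /
            ((∑ i : Fin n, |Z (i : ℕ) ω| ^ p) + W n ω) ^ (1 / p)) := by
        funext ω
        simp [Matrix.mulVec, dotProduct]
      rw [e]
      exact Finset.measurable_sum _ fun j _ =>
        (((hZmeas (j : ℕ)).const_mul _).div hDmeas).const_mul _
    have hYvec : Measurable fun ω => Matrix.mulVec V (fun j : Fin n =>
        ((1 / β) ^ (1 / p)) * Z (j : ℕ) ω) := by
      refine measurable_pi_lambda _ fun i => ?_
      have e : (fun ω => Matrix.mulVec V (fun j : Fin n =>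
          ((1 / β) ^ (1 / p)) * Z (j : ℕ) ω) i)
          = fun ω => ∑ j : Fin n, V i j * (((1 / β) ^ (1 / p)) * Z (j : ℕ) ω) := by
        funext ω
        simp [Matrix.mulVec, dotProduct]
      rw [e]
      exact Finset.measurable_sum _ fun j _ => ((hZmeas (j : ℕ)).const_mul _).const_mul _
    refine aux_lp_coupling P (heuc.comp hXvec) (heuc.comp hYvec) hε2 ?_
    have hdist : ∀ ω,
        dist (euc (Matrix.mulVec V (fun j : Fin n =>
            (n : ℝ) ^ (κ / p) * Z (j : ℕ) ω /
              ((∑ i : Fin n, |Z (i : ℕ) ω| ^ p) + W n ω) ^ (1 / p))))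
          (euc (Matrix.mulVec V (fun j : Fin n => ((1 / β) ^ (1 / p)) * Z (j : ℕ) ω)))
        = |(n : ℝ) ^ (κ / p) / ((∑ i : Fin n, |Z (i : ℕ) ω| ^ p) + W n ω) ^ (1 / p)
              - (1 / β) ^ (1 / p)|
            * Real.sqrt (∑ i : Fin k, (∑ j : Fin n, V i j * Z (j : ℕ) ω) ^ 2) := by
      intro ω
      rw [EuclideanSpace.dist_eq]
      have hsum : ∑ i : Fin k,
          dist ((euc (Matrix.mulVec V (fun j : Fin n =>
              (n : ℝ) ^ (κ / p) * Z (j : ℕ) ω /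
                ((∑ i : Fin n, |Z (i : ℕ) ω| ^ p) + W n ω) ^ (1 / p))) :
              EuclideanSpace ℝ (Fin k)) i)
            ((euc (Matrix.mulVec V (fun j : Fin n =>
              ((1 / β) ^ (1 / p)) * Z (j : ℕ) ω)) : EuclideanSpace ℝ (Fin k)) i) ^ 2
          = ((n : ℝ) ^ (κ / p) / ((∑ i : Fin n, |Z (i : ℕ) ω| ^ p) + W n ω) ^ (1 / p)
              - (1 / β) ^ (1 / p)) ^ 2
            * ∑ i : Fin k, (∑ j : Fin n, V i j * Z (j : ℕ) ω) ^ 2 := by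
        rw [Finset.mul_sum]
        refine Finset.sum_congr rfl fun i _ => ?_
        have e0 : (euc (Matrix.mulVec V (fun j : Fin n =>
            (n : ℝ) ^ (κ / p) * Z (j : ℕ) ω /
              ((∑ i : Fin n, |Z (i : ℕ) ω| ^ p) + W n ω) ^ (1 / p))) :
            EuclideanSpace ℝ (Fin k)) i
            = ∑ j : Fin n, V i j * ((n : ℝ) ^ (κ / p) * Z (j : ℕ) ω /
              ((∑ i : Fin n, |Z (i : ℕ) ω| ^ p) + W n ω) ^ (1 / p)) := by
          simp [euc, Matrix.mulVec, dotProduct]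
        have e1 : (euc (Matrix.mulVec V (fun j : Fin n =>
            ((1 / β) ^ (1 / p)) * Z (j : ℕ) ω)) : EuclideanSpace ℝ (Fin k)) i
            = ∑ j : Fin n, V i j * (((1 / β) ^ (1 / p)) * Z (j : ℕ) ω) := by
          simp [euc, Matrix.mulVec, dotProduct]
        rw [e0, e1, Real.dist_eq, sq_abs]
        have e2 : ∑ j : Fin n, V i j * ((n : ℝ) ^ (κ / p) * Z (j : ℕ) ω /
              ((∑ i : Fin n, |Z (i : ℕ) ω| ^ p) + W n ω) ^ (1 / p))
            - ∑ j : Fin n, V i j * (((1 / β) ^ (1 / p)) * Z (j : ℕ) ω)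
            = ((n : ℝ) ^ (κ / p) / ((∑ i : Fin n, |Z (i : ℕ) ω| ^ p) + W n ω) ^ (1 / p)
                - (1 / β) ^ (1 / p)) * ∑ j : Fin n, V i j * Z (j : ℕ) ω := by
          rw [← Finset.sum_sub_distrib, Finset.mul_sum]
          refine Finset.sum_congr rfl fun j _ => ?_
          ring
        rw [e2]
        ring
      rw [hsum, Real.sqrt_mul (sq_nonneg _), Real.sqrt_sq_eq_abs]
    have hincl : {ω | ε / 2 ≤
        dist (euc (Matrix.mulVec V (fun j : Fin n =>
            (n : ℝ) ^ (κ / p) * Z (j : ℕ) ω /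
              ((∑ i : Fin n, |Z (i : ℕ) ω| ^ p) + W n ω) ^ (1 / p))))
          (euc (Matrix.mulVec V (fun j : Fin n => ((1 / β) ^ (1 / p)) * Z (j : ℕ) ω)))}
        ⊆ {ω | δ ≤ |(n : ℝ) ^ (κ / p) /
              ((∑ i : Fin n, |Z (i : ℕ) ω| ^ p) + W n ω) ^ (1 / p) - (1 / β) ^ (1 / p)|}
          ∪ {ω | (ε / 2 / δ) ^ 2 ≤ ∑ i : Fin k, (∑ j : Fin n, V i j * Z (j : ℕ) ω) ^ 2} := by
      intro ω hω
      simp only [Set.mem_setOf_eq] at hω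
      rw [hdist ω] at hω
      by_cases h1 : δ ≤ |(n : ℝ) ^ (κ / p) /
          ((∑ i : Fin n, |Z (i : ℕ) ω| ^ p) + W n ω) ^ (1 / p) - (1 / β) ^ (1 / p)|
      · exact Or.inl h1
      by_cases h2 : (ε / 2 / δ) ^ 2 ≤ ∑ i : Fin k, (∑ j : Fin n, V i j * Z (j : ℕ) ω) ^ 2
      · exact Or.inr h2
      exfalso
      push_neg at h1 h2
      have hsq : Real.sqrt (∑ i : Fin k, (∑ j : Fin n, V i j * Z (j : ℕ) ω) ^ 2) < ε / 2 / δ :=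
        (Real.sqrt_lt' (by positivity)).mpr h2
      have hmul : |(n : ℝ) ^ (κ / p) /
            ((∑ i : Fin n, |Z (i : ℕ) ω| ^ p) + W n ω) ^ (1 / p) - (1 / β) ^ (1 / p)|
          * Real.sqrt (∑ i : Fin k, (∑ j : Fin n, V i j * Z (j : ℕ) ω) ^ 2)
          < δ * (ε / 2 / δ) :=
        mul_lt_mul'' h1 hsq (abs_nonneg _) (Real.sqrt_nonneg _)
      rw [mul_comm δ (ε / 2 / δ), div_mul_cancel₀ _ hδpos.ne'] at hmul
      linarith
    calc P {ω | ε / 2 ≤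
        dist (euc (Matrix.mulVec V (fun j : Fin n =>
            (n : ℝ) ^ (κ / p) * Z (j : ℕ) ω /
              ((∑ i : Fin n, |Z (i : ℕ) ω| ^ p) + W n ω) ^ (1 / p))))
          (euc (Matrix.mulVec V (fun j : Fin n => ((1 / β) ^ (1 / p)) * Z (j : ℕ) ω)))}
        ≤ P ({ω | δ ≤ |(n : ℝ) ^ (κ / p) /
              ((∑ i : Fin n, |Z (i : ℕ) ω| ^ p) + W n ω) ^ (1 / p) - (1 / β) ^ (1 / p)|}
          ∪ {ω | (ε / 2 / δ) ^ 2 ≤ ∑ i : Fin k, (∑ j : Fin n, V i j * Z (j : ℕ) ω) ^ 2}) :=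
          measure_mono hincl
      _ ≤ P {ω | δ ≤ |(n : ℝ) ^ (κ / p) /
              ((∑ i : Fin n, |Z (i : ℕ) ω| ^ p) + W n ω) ^ (1 / p) - (1 / β) ^ (1 / p)|}
          + P {ω | (ε / 2 / δ) ^ 2 ≤ ∑ i : Fin k, (∑ j : Fin n, V i j * Z (j : ℕ) ω) ^ 2} :=
          measure_union_le _ _
      _ ≤ ENNReal.ofReal (ε / 2 / 2) + ENNReal.ofReal (ε / 2 / 2) :=
          add_le_add hC (hQbound n V hV)
      _ = ENNReal.ofReal (ε / 2) := by
          rw [← ENNReal.ofReal_add (by positivity) (by positivity)]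
          congr 1
          ring
  rw [Filter.eventually_atTop] at hfinal
  obtain ⟨N, hN⟩ := hfinal
  refine ⟨N, fun n hn => ?_⟩
  rw [Real.dist_eq, sub_zero, abs_lt]
  refine ⟨lt_of_lt_of_le (by linarith : -ε < 0)
    (Real.iSup_nonneg fun V => Real.iSup_nonneg fun _ => ENNReal.toReal_nonneg), ?_⟩
  refine lt_of_le_of_lt ?_ (by linarith : ε / 2 < ε)
  refine Real.iSup_le (fun V => ?_) hε2.le
  refine Real.iSup_le (fun hV => ?_) hε2.le
  exact hN n hn V hV


end
end

section
/- Let p ∈ [1,∞), b > 0, κ ∈ (0,∞), and let (a_n)_{n∈ℕ} be a positive increasing sequence with m := inf_n a_n > 4/p and lim_{n→∞} a_n/n^κ = λ ∈ (0,∞). For each n let W_n have the gamma distribution with shape a_n and rate b. Then, with M_p defined by M_p^{-1} = ∏_{i=0}^{4} (1 - 4/(p(m+i))), one has for every n ∈ ℕ that E[(n^κ/W_n)^{4/p}] ≤ b^{4/p} M_p (a_n/n^κ)^{-4/p}, and consequently sup_{n∈ℕ} E[(n^κ/W_n)^{4/p}] < ∞. -/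
open MeasureTheory ProbabilityTheory Filter
open scoped ENNReal NNReal

noncomputable section

lemma myGamma_add_five {x : ℝ} (hx : 0 < x) :
    Real.Gamma (x + 5) = (x * (x+1) * (x+2) * (x+3) * (x+4)) * Real.Gamma x := by
  have h4 : Real.Gamma (x+5) = (x+4) * Real.Gamma (x+4) := by
    rw [show x+5 = (x+4)+1 by ring, Real.Gamma_add_one (by positivity)]
  have h3 : Real.Gamma (x+4) = (x+3) * Real.Gamma (x+3) := by
    rw [show x+4 = (x+3)+1 by ring, Real.Gamma_add_one (by positivity)]
  have h2 : Real.Gamma (x+3) = (x+2) * Real.Gamma (x+2) := by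
    rw [show x+3 = (x+2)+1 by ring, Real.Gamma_add_one (by positivity)]
  have h1 : Real.Gamma (x+2) = (x+1) * Real.Gamma (x+1) := by
    rw [show x+2 = (x+1)+1 by ring, Real.Gamma_add_one (by positivity)]
  have h0 : Real.Gamma (x+1) = x * Real.Gamma x := Real.Gamma_add_one hx.ne'
  rw [h4, h3, h2, h1, h0]; ring

lemma myGamma_ratio {a t : ℝ} (ht : 0 < t) (ht5 : t < 5) (hta : t < a) :
    Real.Gamma (a - t) * ((a-t) * (a-t+1) * (a-t+2) * (a-t+3) * (a-t+4)) ≤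
      (a * (a+1) * (a+2) * (a+3) * (a+4)) * a ^ (-t) * Real.Gamma a := by
  have ha : 0 < a := ht.trans hta
  have hat : 0 < a - t := by linarith
  set θ : ℝ := t / 5 with hθdef
  have hθ0 : 0 < θ := by positivity
  have hθ1 : θ < 1 := by rw [hθdef]; linarith [div_lt_one (by norm_num : (0:ℝ) < 5) |>.mpr ht5]
  -- convexity
  have hconv := Real.convexOn_log_Gamma.2 (Set.mem_Ioi.mpr (by positivity : (0:ℝ) < a + 5))
    (Set.mem_Ioi.mpr ha) (by linarith : (0:ℝ) ≤ 1 - θ) hθ0.le (by ring)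
  rw [smul_eq_mul, smul_eq_mul] at hconv
  have harg : (1 - θ) * (a + 5) + θ * a = (a - t) + 5 := by rw [hθdef]; ring
  rw [harg] at hconv
  simp only [Function.comp_apply] at hconv
  have hG5 : 0 < Real.Gamma (a + 5) := Real.Gamma_pos_of_pos (by linarith)
  have hGa : 0 < Real.Gamma a := Real.Gamma_pos_of_pos ha
  have hGat5 : 0 < Real.Gamma ((a - t) + 5) := Real.Gamma_pos_of_pos (by linarith)
  have key : Real.Gamma ((a - t) + 5) ≤ Real.Gamma (a+5) ^ (1-θ) * Real.Gamma a ^ θ := by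
    calc Real.Gamma ((a-t)+5) = Real.exp (Real.log (Real.Gamma ((a-t)+5))) :=
          (Real.exp_log hGat5).symm
      _ ≤ Real.exp ((1-θ) * Real.log (Real.Gamma (a+5)) + θ * Real.log (Real.Gamma a)) :=
          Real.exp_le_exp.mpr hconv
      _ = Real.Gamma (a+5) ^ (1-θ) * Real.Gamma a ^ θ := by
          rw [Real.exp_add, Real.rpow_def_of_pos hG5, Real.rpow_def_of_pos hGa,
            mul_comm (Real.log _), mul_comm (Real.log _)]
  set P : ℝ := a * (a+1) * (a+2) * (a+3) * (a+4) with hPdef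
  have hP : 0 < P := by positivity
  have hG5eq : Real.Gamma (a + 5) = P * Real.Gamma a := myGamma_add_five ha
  have hGat5eq : Real.Gamma ((a-t) + 5) =
      ((a-t) * (a-t+1) * (a-t+2) * (a-t+3) * (a-t+4)) * Real.Gamma (a - t) :=
    myGamma_add_five hat
  -- P ^ (1-θ) ≤ P * a ^ (-t)
  have hPbound : P ^ (1-θ) ≤ P * a ^ (-t) := by
    have h1 : P ^ (1-θ) = P * P ^ (-θ) := by
      rw [show (1:ℝ) - θ = 1 + (-θ) by ring, Real.rpow_add hP, Real.rpow_one]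
    have ha5 : a ^ (5:ℕ) ≤ P := by
      have : a ^ (5:ℕ) = a * a * a * a * a := by ring
      rw [this, hPdef]
      gcongr <;> linarith
    have h2 : P ^ (-θ) ≤ (a ^ (5:ℕ) : ℝ) ^ (-θ) := by
      rw [Real.rpow_neg hP.le, Real.rpow_neg (by positivity)]
      exact inv_anti₀ (Real.rpow_pos_of_pos (by positivity) θ)
        (Real.rpow_le_rpow (by positivity) ha5 hθ0.le)
    have h3 : ((a ^ (5:ℕ) : ℝ)) ^ (-θ) = a ^ (-t) := by
      rw [← Real.rpow_natCast a 5, ← Real.rpow_mul ha.le]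
      norm_num [hθdef]
      ring_nf
    rw [h1, ← h3]
    exact mul_le_mul_of_nonneg_left h2 hP.le
  have hsplit : Real.Gamma (a+5) ^ (1-θ) * Real.Gamma a ^ θ
      = P ^ (1-θ) * (Real.Gamma a ^ (1-θ) * Real.Gamma a ^ θ) := by
    rw [hG5eq, Real.mul_rpow hP.le hGa.le]; ring
  have hGcomb : Real.Gamma a ^ (1-θ) * Real.Gamma a ^ θ = Real.Gamma a := by
    rw [← Real.rpow_add hGa]; norm_num
  calc Real.Gamma (a - t) * ((a-t) * (a-t+1) * (a-t+2) * (a-t+3) * (a-t+4))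
      = Real.Gamma ((a-t)+5) := by rw [hGat5eq]; ring
    _ ≤ Real.Gamma (a+5) ^ (1-θ) * Real.Gamma a ^ θ := key
    _ = P ^ (1-θ) * Real.Gamma a := by rw [hsplit, hGcomb]
    _ ≤ (P * a ^ (-t)) * Real.Gamma a := by
        exact mul_le_mul_of_nonneg_right hPbound hGa.le
    _ = P * a ^ (-t) * Real.Gamma a := by ring

lemma myGamma_moment {a b t c : ℝ} (hb : 0 < b) (ht : 0 < t) (hta : t < a) (hc : 0 ≤ c) :
    ∫⁻ x, ENNReal.ofReal ((c / x) ^ t) ∂(gammaMeasure a b) =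
      ENNReal.ofReal (c ^ t * b ^ t * (Real.Gamma (a - t) / Real.Gamma a)) := by
  have ha : 0 < a := ht.trans hta
  have hat : 0 < a - t := by linarith
  have hGa : 0 < Real.Gamma a := Real.Gamma_pos_of_pos ha
  have hGat : 0 < Real.Gamma (a - t) := Real.Gamma_pos_of_pos hat
  set C : ℝ := c ^ t * b ^ t * (Real.Gamma (a - t) / Real.Gamma a) with hCdef
  have hC : 0 ≤ C := by positivity
  have hmeasf : Measurable fun x : ℝ => ENNReal.ofReal ((c / x) ^ t) :=
    ((measurable_const.div measurable_id).pow_const _).ennreal_ofReal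
  have hpdf : Measurable (gammaPDF a b) := (measurable_gammaPDFReal a b).ennreal_ofReal
  have hpdf' : Measurable (gammaPDF (a - t) b) :=
    (measurable_gammaPDFReal (a-t) b).ennreal_ofReal
  rw [gammaMeasure, lintegral_withDensity_eq_lintegral_mul _ hpdf hmeasf]
  have hae : (fun x => (gammaPDF a b * fun x : ℝ => ENNReal.ofReal ((c / x) ^ t)) x)
      =ᵐ[volume] fun x => ENNReal.ofReal C * gammaPDF (a - t) b x := by
    have h0 : ∀ᵐ x : ℝ, x ≠ 0 := by
      have : (volume : Measure ℝ) {0} = 0 := measure_singleton 0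
      exact eventually_iff.mpr (compl_mem_ae_iff.mpr this)
    filter_upwards [h0] with x hx
    rcases lt_or_gt_of_ne hx with hneg | hpos
    · simp [gammaPDF_of_neg hneg]
    · simp only [Pi.mul_apply, gammaPDF_of_nonneg hpos.le]
      have hnn : (0:ℝ) ≤ b ^ a / Real.Gamma a * x ^ (a-1) * Real.exp (-(b*x)) := by
        positivity
      rw [← ENNReal.ofReal_mul hnn, ← ENNReal.ofReal_mul hC]
      congr 1
      have hxt : (0:ℝ) < x ^ t := Real.rpow_pos_of_pos hpos t
      have e1 : (c / x) ^ t = c ^ t / x ^ t := Real.div_rpow hc hpos.le t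
      have e2 : x ^ (a-1) = x ^ t * x ^ (a-t-1) := by
        rw [← Real.rpow_add hpos]; ring_nf
      have e3 : b ^ a = b ^ t * b ^ (a-t) := by
        rw [← Real.rpow_add hb]; ring_nf
      rw [e1, e2, e3, hCdef]
      field_simp
  rw [lintegral_congr_ae hae, lintegral_const_mul _ hpdf',
    lintegral_gammaPDF_eq_one hat hb, mul_one]

lemma myProd5_le {q0 q1 q2 q3 q4 p0 p1 p2 p3 p4 : ℝ}
    (h0 : 0 ≤ q0) (h1 : 0 ≤ q1) (h2 : 0 ≤ q2) (h3 : 0 ≤ q3) (h4 : 0 ≤ q4)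
    (g0 : q0 ≤ p0) (g1 : q1 ≤ p1) (g2 : q2 ≤ p2) (g3 : q3 ≤ p3) (g4 : q4 ≤ p4) :
    q0 * q1 * q2 * q3 * q4 ≤ p0 * p1 * p2 * p3 * p4 := by
  have k0 : 0 ≤ p0 := h0.trans g0
  have k1 : 0 ≤ p1 := h1.trans g1
  have k2 : 0 ≤ p2 := h2.trans g2
  have k3 : 0 ≤ p3 := h3.trans g3
  exact mul_le_mul (mul_le_mul (mul_le_mul (mul_le_mul g0 g1 h1 k0) g2 h2 (by positivity))
    g3 h3 (by positivity)) g4 h4 (by positivity)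

lemma myRatio_bound {x t mm : ℝ} (ht : 0 < t) (ht5 : t < 5) (htm : t < mm) (hmx : mm ≤ x) :
    Real.Gamma (x - t) / Real.Gamma x ≤
      (∏ i ∈ Finset.range 5, (1 - t / (mm + (i : ℕ))))⁻¹ * x ^ (-t) := by
  have hm0 : 0 < mm := ht.trans htm
  have hx0 : 0 < x := hm0.trans_le hmx
  have hGx : 0 < Real.Gamma x := Real.Gamma_pos_of_pos hx0
  have hprod : (∏ i ∈ Finset.range 5, (1 - t / (mm + (i : ℕ))))
      = (1 - t/mm) * (1 - t/(mm+1)) * (1 - t/(mm+2)) * (1 - t/(mm+3)) * (1 - t/(mm+4)) := by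
    simp [Finset.prod_range_succ]
  -- positivity of the mm-factors
  have fq : ∀ s : ℝ, 0 ≤ s → 0 < 1 - t / (mm + s) := by
    intro s hs
    have : t / (mm + s) < 1 := (div_lt_one (by linarith)).mpr (by linarith)
    linarith
  have fp : ∀ s : ℝ, 0 ≤ s → 1 - t / (mm + s) ≤ 1 - t / (x + s) := by
    intro s hs
    have : t / (x + s) ≤ t / (mm + s) :=
      div_le_div_of_nonneg_left ht.le (by linarith) (by linarith)
    linarith
  set Q : ℝ := (1 - t/mm) * (1 - t/(mm+1)) * (1 - t/(mm+2)) * (1 - t/(mm+3)) * (1 - t/(mm+4))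
    with hQdef
  set Qx : ℝ := (1 - t/x) * (1 - t/(x+1)) * (1 - t/(x+2)) * (1 - t/(x+3)) * (1 - t/(x+4))
    with hQxdef
  have hQpos : 0 < Q := by
    have a0 := fq 0 le_rfl; have a1 := fq 1 (by norm_num); have a2 := fq 2 (by norm_num)
    have a3 := fq 3 (by norm_num); have a4 := fq 4 (by norm_num)
    rw [hQdef]; simp only [add_zero] at a0 ⊢; positivity
  have hQQx : Q ≤ Qx := by
    have a0 := fq 0 le_rfl; have a1 := fq 1 (by norm_num); have a2 := fq 2 (by norm_num)
    have a3 := fq 3 (by norm_num); have a4 := fq 4 (by norm_num)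
    have b0 := fp 0 le_rfl; have b1 := fp 1 (by norm_num); have b2 := fp 2 (by norm_num)
    have b3 := fp 3 (by norm_num); have b4 := fp 4 (by norm_num)
    simp only [add_zero] at a0 b0
    exact myProd5_le a0.le a1.le a2.le a3.le a4.le b0 b1 b2 b3 b4
  have hQxpos : 0 < Qx := hQpos.trans_le hQQx
  -- product identity
  have hQxP : Qx * (x*(x+1)*(x+2)*(x+3)*(x+4))
      = (x-t)*(x-t+1)*(x-t+2)*(x-t+3)*(x-t+4) := by
    rw [hQxdef]
    field_simp
    ring
  have hP : (0:ℝ) < x*(x+1)*(x+2)*(x+3)*(x+4) := by positivity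
  have h1 : Real.Gamma (x - t) * Qx * (x*(x+1)*(x+2)*(x+3)*(x+4))
      ≤ x ^ (-t) * Real.Gamma x * (x*(x+1)*(x+2)*(x+3)*(x+4)) := by
    calc Real.Gamma (x - t) * Qx * (x*(x+1)*(x+2)*(x+3)*(x+4))
        = Real.Gamma (x - t) * ((x-t)*(x-t+1)*(x-t+2)*(x-t+3)*(x-t+4)) := by
          rw [mul_assoc, hQxP]
      _ ≤ (x*(x+1)*(x+2)*(x+3)*(x+4)) * x ^ (-t) * Real.Gamma x :=
          myGamma_ratio ht ht5 (htm.trans_le hmx)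
      _ = x ^ (-t) * Real.Gamma x * (x*(x+1)*(x+2)*(x+3)*(x+4)) := by ring
  have h2 : Real.Gamma (x - t) * Qx ≤ x ^ (-t) * Real.Gamma x :=
    le_of_mul_le_mul_right h1 hP
  rw [hprod, div_le_iff₀ hGx]
  calc Real.Gamma (x - t) = (Real.Gamma (x - t) * Qx) * Qx⁻¹ := by
        field_simp
    _ ≤ (x ^ (-t) * Real.Gamma x) * Qx⁻¹ :=
        mul_le_mul_of_nonneg_right h2 (inv_nonneg.mpr hQxpos.le)
    _ ≤ (x ^ (-t) * Real.Gamma x) * Q⁻¹ := by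
        have : Qx⁻¹ ≤ Q⁻¹ := inv_anti₀ hQpos hQQx
        exact mul_le_mul_of_nonneg_left this (by positivity)
    _ = Q⁻¹ * x ^ (-t) * Real.Gamma x := by ring

theorem statement11
    (p : ℝ) (hp : 1 ≤ p) (b : ℝ) (hb : 0 < b) (κ : ℝ) (hκ : 0 < κ)
    (a : ℕ → ℝ) (hapos : ∀ n, 0 < a n) (hamono : Monotone a)
    (m : ℝ) (hm : m = ⨅ n, a n) (hm4 : 4 / p < m)
    (lam : ℝ) (hlam0 : 0 < lam)
    (hlam : Filter.Tendsto (fun n : ℕ => a n / (n : ℝ) ^ κ) Filter.atTop (nhds lam))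
    (Ω : Type) [MeasurableSpace Ω] (P : Measure Ω) [IsProbabilityMeasure P]
    (W : ℕ → Ω → ℝ) (hWmeas : ∀ n, Measurable (W n))
    (hWlaw : ∀ n, Measure.map (W n) P = gammaMeasure (a n) b)
    (Mp : ℝ) (hMp : Mp⁻¹ = ∏ i ∈ Finset.range 5, (1 - 4 / (p * (m + i)))) :
    (∀ n : ℕ, ∫⁻ ω, ENNReal.ofReal (((n : ℝ) ^ κ / W n ω) ^ (4 / p)) ∂P
      ≤ ENNReal.ofReal (b ^ (4 / p) * Mp * (a n / (n : ℝ) ^ κ) ^ (-(4 / p)))) ∧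
    (⨆ n : ℕ, ∫⁻ ω, ENNReal.ofReal (((n : ℝ) ^ κ / W n ω) ^ (4 / p)) ∂P) < ⊤ := by
  have hp0 : 0 < p := lt_of_lt_of_le one_pos hp
  set t : ℝ := 4 / p with htdef
  have ht : 0 < t := by positivity
  have ht5 : t < 5 := by
    rw [htdef, div_lt_iff₀ hp0]; nlinarith
  have hbdd : BddBelow (Set.range a) := ⟨a 0, by rintro _ ⟨n, rfl⟩; exact hamono (Nat.zero_le n)⟩
  have hman : ∀ n, m ≤ a n := fun n => hm ▸ ciInf_le hbdd n
  have hm0 : 0 < m := ht.trans hm4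
  -- identify Mp
  have hMp' : Mp⁻¹ = ∏ i ∈ Finset.range 5, (1 - t / (m + (i : ℕ))) := by
    rw [hMp]
    exact Finset.prod_congr rfl fun i _ => by rw [htdef, div_div]
  have hQpos : 0 < ∏ i ∈ Finset.range 5, (1 - t / (m + (i : ℕ))) := by
    apply Finset.prod_pos
    intro i _
    have hmi : (0:ℝ) < m + i := by positivity
    have : t / (m + i) < 1 := (div_lt_one hmi).mpr (by
      have : (0:ℝ) ≤ (i:ℝ) := Nat.cast_nonneg i
      linarith)
    linarith
  have hMpinv : Mp = (∏ i ∈ Finset.range 5, (1 - t / (m + (i : ℕ))))⁻¹ := by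
    rw [← hMp', inv_inv]
  have hMppos : 0 < Mp := by rw [hMpinv]; exact inv_pos.mpr hQpos
  -- measurability
  have hmeasf : ∀ c : ℝ, Measurable fun x : ℝ => ENNReal.ofReal ((c / x) ^ t) := fun c =>
    ((measurable_const.div measurable_id).pow_const _).ennreal_ofReal
  -- the main bound
  have main : ∀ n : ℕ, ∫⁻ ω, ENNReal.ofReal (((n : ℝ) ^ κ / W n ω) ^ t) ∂P
      ≤ ENNReal.ofReal (b ^ t * Mp * (a n / (n : ℝ) ^ κ) ^ (-t)) := by
    intro n
    rcases Nat.eq_zero_or_pos n with rfl | hn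
    · have hc0 : ((0:ℕ) : ℝ) ^ κ = 0 := by
        rw [Nat.cast_zero, Real.zero_rpow hκ.ne']
      simp only [hc0, zero_div, Real.zero_rpow ht.ne', ENNReal.ofReal_zero, lintegral_zero]
      exact zero_le
    · set c : ℝ := (n : ℝ) ^ κ with hcdef
      have hc : 0 < c := Real.rpow_pos_of_pos (by exact_mod_cast hn) κ
      have hta : t < a n := hm4.trans_le (hman n)
      have hstep : ∫⁻ ω, ENNReal.ofReal ((c / W n ω) ^ t) ∂P
          = ENNReal.ofReal (c ^ t * b ^ t * (Real.Gamma (a n - t) / Real.Gamma (a n))) := by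
        have : ∫⁻ ω, ENNReal.ofReal ((c / W n ω) ^ t) ∂P
            = ∫⁻ x, ENNReal.ofReal ((c / x) ^ t) ∂(gammaMeasure (a n) b) := by
          rw [← hWlaw n, lintegral_map (hmeasf c) (hWmeas n)]
        rw [this, myGamma_moment hb ht hta hc.le]
      rw [hstep]
      apply ENNReal.ofReal_le_ofReal
      have hrw : (a n / c) ^ (-t) = c ^ t * (a n) ^ (-t) := by
        rw [Real.rpow_neg (div_nonneg (hapos n).le hc.le), Real.div_rpow (hapos n).le hc.le,
          Real.rpow_neg (hapos n).le]
        field_simp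
      rw [hrw]
      have hratio := myRatio_bound ht ht5 hm4 (hman n)
      calc c ^ t * b ^ t * (Real.Gamma (a n - t) / Real.Gamma (a n))
          ≤ c ^ t * b ^ t * (Mp * (a n) ^ (-t)) := by
            apply mul_le_mul_of_nonneg_left _ (by positivity)
            rw [hMpinv]
            exact hratio
        _ = b ^ t * Mp * (c ^ t * (a n) ^ (-t)) := by ring
  refine ⟨main, ?_⟩
  -- boundedness of the RHS
  have htend : Filter.Tendsto (fun n : ℕ => (a n / (n : ℝ) ^ κ) ^ (-t)) Filter.atTop
      (nhds (lam ^ (-t))) := hlam.rpow_const (Or.inl hlam0.ne')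
  obtain ⟨C, hC⟩ := htend.bddAbove_range
  have hub : ∀ n : ℕ, (a n / (n : ℝ) ^ κ) ^ (-t) ≤ C := fun n => hC ⟨n, rfl⟩
  calc ⨆ n : ℕ, ∫⁻ ω, ENNReal.ofReal (((n : ℝ) ^ κ / W n ω) ^ t) ∂P
      ≤ ENNReal.ofReal (b ^ t * Mp * C) := by
        refine iSup_le fun n => (main n).trans (ENNReal.ofReal_le_ofReal ?_)
        exact mul_le_mul_of_nonneg_left (hub n) (by positivity)
    _ < ⊤ := ENNReal.ofReal_lt_top

end
end

section
/- Let p ≥ 1 and m > 4/p, and set M_p^{-1} = ∏_{i=0}^{4} (1 - 4/(p(m+i))), so that M_p ∈ (0,∞). Then for every real a ≥ m, Γ(a - 4/p)/Γ(a) ≤ M_p · a^{-4/p}. -/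
open MeasureTheory ProbabilityTheory Filter
open scoped ENNReal NNReal

noncomputable section

set_option maxHeartbeats 1000000 in
theorem statement12
    (p m : ℝ) (hp : 1 ≤ p) (hm : 4 / p < m)
    (Mp : ℝ) (hMp : Mp⁻¹ = ∏ i ∈ Finset.range 5, (1 - 4 / (p * (m + i)))) :
    0 < Mp ∧ ∀ a : ℝ, m ≤ a →
      Real.Gamma (a - 4 / p) / Real.Gamma a ≤ Mp * a ^ (-(4 / p)) := by
  have hp0 : (0:ℝ) < p := lt_of_lt_of_le one_pos hp
  set q : ℝ := 4 / p with hq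
  have hq0 : 0 < q := div_pos (by norm_num) hp0
  have hq4 : q ≤ 4 := by
    rw [hq, div_le_iff₀ hp0]; nlinarith
  have hm0 : 0 < m := lt_trans hq0 hm
  have hMp' : Mp⁻¹ = (1 - q/m) * (1 - q/(m+1)) * (1 - q/(m+2)) * (1 - q/(m+3)) * (1 - q/(m+4)) := by
    rw [hMp]
    simp [Finset.prod_range_succ, hq, div_div]
  have hfac : ∀ i : ℝ, 0 ≤ i → 0 < 1 - q/(m+i) := by
    intro i hi
    have h1 : q/(m+i) < 1 := (div_lt_one (by linarith)).2 (by linarith)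
    linarith
  have h0 := hfac 0 le_rfl
  have h1 := hfac 1 (by norm_num)
  have h2 := hfac 2 (by norm_num)
  have h3 := hfac 3 (by norm_num)
  have h4 := hfac 4 (by norm_num)
  rw [show m + (0:ℝ) = m by ring] at h0
  have hMpinv : 0 < Mp⁻¹ := by rw [hMp']; positivity
  have hMp0 : 0 < Mp := by
    rcases lt_trichotomy Mp 0 with h|h|h
    · exfalso; have := inv_neg''.2 h; linarith
    · rw [h] at hMpinv; simp at hMpinv
    · exact h
  refine ⟨hMp0, fun a ha => ?_⟩
  have ha0 : 0 < a := lt_of_lt_of_le hm0 ha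
  have haq : 0 < a - q := by linarith
  have hrec : ∀ x : ℝ, 0 < x →
      Real.Gamma (x + 5) = x*(x+1)*(x+2)*(x+3)*(x+4) * Real.Gamma x := by
    intro x hx
    rw [show x + 5 = (x+4)+1 by ring, Real.Gamma_add_one (by linarith),
      show x + 4 = (x+3)+1 by ring, Real.Gamma_add_one (by linarith),
      show x + 3 = (x+2)+1 by ring, Real.Gamma_add_one (by linarith),
      show x + 2 = (x+1)+1 by ring, Real.Gamma_add_one (by linarith),
      Real.Gamma_add_one (ne_of_gt hx)]
    ring
  set G1 := Real.Gamma (a - q) with hG1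
  set G2 := Real.Gamma a with hG2
  have hG1p : 0 < G1 := Real.Gamma_pos_of_pos haq
  have hG2p : 0 < G2 := Real.Gamma_pos_of_pos ha0
  set P1 := (a-q)*(a-q+1)*(a-q+2)*(a-q+3)*(a-q+4) with hP1def
  set P2 := a*(a+1)*(a+2)*(a+3)*(a+4) with hP2def
  have hP1p : 0 < P1 := by rw [hP1def]; positivity
  have hP2p : 0 < P2 := by rw [hP2def]; positivity
  have hrec1 : Real.Gamma (a - q + 5) = P1 * G1 := hrec (a-q) haq
  have hrec2 : Real.Gamma (a + 5) = P2 * G2 := hrec a ha0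
  have hGmid : Real.Gamma (a + 5 - q) = (a + 4 - q) * Real.Gamma (a + 4 - q) := by
    rw [show a + 5 - q = (a + 4 - q) + 1 by ring, Real.Gamma_add_one (ne_of_gt (by linarith))]
  have hGl : 0 < Real.Gamma (a + 4 - q) := Real.Gamma_pos_of_pos (by linarith)
  have hGm : 0 < Real.Gamma (a + 5 - q) := Real.Gamma_pos_of_pos (by linarith)
  have hG5 : 0 < Real.Gamma (a + 5) := Real.Gamma_pos_of_pos (by linarith)
  have hslope := Real.convexOn_log_Gamma.slope_mono_adjacent
    (x := a + 4 - q) (y := a + 5 - q) (z := a + 5)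
    (Set.mem_Ioi.2 (by linarith)) (Set.mem_Ioi.2 (by linarith))
    (by linarith) (by linarith)
  have hlog : Real.log (a + 4 - q) ≤
      (Real.log (Real.Gamma (a+5)) - Real.log (Real.Gamma (a+5-q))) / q := by
    have e1 : ((Real.log ∘ Real.Gamma) (a+5-q) -
        (Real.log ∘ Real.Gamma) (a+4-q)) / (a+5-q - (a+4-q))
        = Real.log (a + 4 - q) := by
      have e0 : (Real.log ∘ Real.Gamma) (a+5-q) =
          Real.log (a + 4 - q) + (Real.log ∘ Real.Gamma) (a+4-q) := by
        simp only [Function.comp_apply, hGmid]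
        rw [Real.log_mul (ne_of_gt (show (0:ℝ) < a + 4 - q by linarith)) (ne_of_gt hGl)]
      rw [e0]
      ring_nf
    have e2 : a + 5 - (a + 5 - q) = q := by ring
    rw [e1, e2] at hslope
    exact hslope
  have hlog2 : q * Real.log a ≤
      Real.log (Real.Gamma (a+5)) - Real.log (Real.Gamma (a+5-q)) := by
    have hla : Real.log a ≤ Real.log (a + 4 - q) :=
      Real.log_le_log ha0 (by linarith)
    have h' := (le_div_iff₀ hq0).1 hlog
    have h'' : Real.log a * q ≤ Real.log (a + 4 - q) * q :=
      mul_le_mul_of_nonneg_right hla hq0.le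
    nlinarith
  have hkey : a ^ q * Real.Gamma (a - q + 5) ≤ Real.Gamma (a + 5) := by
    have hexp : Real.exp (q * Real.log a) ≤
        Real.exp (Real.log (Real.Gamma (a+5)) - Real.log (Real.Gamma (a+5-q))) :=
      Real.exp_le_exp.2 hlog2
    rw [Real.exp_sub, Real.exp_log hG5, Real.exp_log hGm] at hexp
    have hpow : a ^ q = Real.exp (q * Real.log a) := by
      rw [Real.rpow_def_of_pos ha0, mul_comm]
    rw [show a - q + 5 = a + 5 - q by ring, hpow]
    rw [div_eq_mul_inv] at hexp
    calc Real.exp (q * Real.log a) * Real.Gamma (a + 5 - q)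
        ≤ (Real.Gamma (a+5) * (Real.Gamma (a+5-q))⁻¹) * Real.Gamma (a + 5 - q) := by
          exact mul_le_mul_of_nonneg_right hexp hGm.le
      _ = Real.Gamma (a+5) := by field_simp
  rw [hrec1, hrec2] at hkey
  -- product bound: Mp⁻¹ * P2 ≤ P1
  have hterm : ∀ i : ℝ, 0 ≤ i → 1 - q/(m+i) ≤ (a-q+i)/(a+i) := by
    intro i hi
    have hai : 0 < a + i := by linarith
    have hmi : 0 < m + i := by linarith
    rw [show (a-q+i)/(a+i) = 1 - q/(a+i) by field_simp; ring]
    have : q/(a+i) ≤ q/(m+i) := div_le_div_of_nonneg_left hq0.le hmi (by linarith)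
    linarith
  have hprodle : Mp⁻¹ ≤ ((a-q)/a) * ((a-q+1)/(a+1)) * ((a-q+2)/(a+2)) *
      ((a-q+3)/(a+3)) * ((a-q+4)/(a+4)) := by
    rw [hMp']
    have t0 := hterm 0 le_rfl
    have t1 := hterm 1 (by norm_num)
    have t2 := hterm 2 (by norm_num)
    have t3 := hterm 3 (by norm_num)
    have t4 := hterm 4 (by norm_num)
    rw [show a + (0:ℝ) = a by ring, show a - q + (0:ℝ) = a - q by ring] at t0
    rw [show m + (0:ℝ) = m by ring] at t0
    gcongr <;> first
      | linarith
      | positivity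
  have hprodeq : ((a-q)/a) * ((a-q+1)/(a+1)) * ((a-q+2)/(a+2)) *
      ((a-q+3)/(a+3)) * ((a-q+4)/(a+4)) = P1 / P2 := by
    rw [hP1def, hP2def]
    field_simp
  have hP2Mp : Mp⁻¹ * P2 ≤ P1 := by
    rw [hprodeq] at hprodle
    rw [← le_div_iff₀ hP2p]
    exact hprodle
  have hP2le : P2 ≤ Mp * P1 := by
    have := mul_le_mul_of_nonneg_left hP2Mp hMp0.le
    rw [← mul_assoc, mul_inv_cancel₀ (ne_of_gt hMp0), one_mul] at this
    exact this
  have hap : 0 < a ^ q := Real.rpow_pos_of_pos ha0 q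
  -- finish
  rw [Real.rpow_neg ha0.le, div_le_iff₀ hG2p]
  have hfin : G1 * (a ^ q * P1) ≤ (Mp * (a ^ q)⁻¹ * G2) * (a ^ q * P1) := by
    have e : (Mp * (a ^ q)⁻¹ * G2) * (a ^ q * P1) = Mp * P1 * G2 := by
      field_simp
    rw [e]
    nlinarith [mul_le_mul_of_nonneg_right hP2le hG2p.le]
  exact le_of_mul_le_mul_right hfin (by positivity)


end
end
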